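/- arXiv:1807.10883 — 7 statements merged into one kernel-verified Lean document; each statement's English description precedes it below -/
import Mathlib

section
/- A (k+1)-dimensional linear subspace B of ℝ^{n+1} lies in the image of the embedding j : Graff(k,n) → Gr(k+1,n+1) if and only if B is not contained in the coordinate hyperplane E_n = span{e_1,...,e_n}. Consequently Gr(k+1,n+1) is the disjoint union of j(Graff(k,n)) and a subset isomorphic to Gr(k+1,n). -/
open Module

/-- `j(A + b) = span(A ∪ {b + e_{n+1}})`, with `ℝⁿ` embedded in `ℝⁿ⁺¹` as the first
`n` coordinates. -/
noncomputable def graffEmbed {n : ℕ} (s : AffineSubspace ℝ (Fin n → ℝ)) :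
    Submodule ℝ (Fin (n + 1) → ℝ) :=
  Submodule.span ℝ
    ((fun x : Fin n → ℝ => Fin.snoc x (0 : ℝ) + Pi.single (Fin.last n) (1 : ℝ)) '' s)

/-- The coordinate hyperplane `E_n = span{e_1, …, e_n} ⊆ ℝⁿ⁺¹`: vectors whose last
coordinate vanishes. -/
noncomputable def coordHyperplane (n : ℕ) : Submodule ℝ (Fin (n + 1) → ℝ) :=
  LinearMap.ker (LinearMap.proj (R := ℝ) (φ := fun _ : Fin (n + 1) => ℝ) (Fin.last n))

/-- The linear embedding `ℝⁿ → ℝⁿ⁺¹` as the first `n` coordinates. -/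
noncomputable def liftL (n : ℕ) : (Fin n → ℝ) →ₗ[ℝ] (Fin (n + 1) → ℝ) where
  toFun x := Fin.snoc x 0
  map_add' x y := by
    ext i
    induction i using Fin.lastCases <;> simp
  map_smul' c x := by
    ext i
    induction i using Fin.lastCases <;> simp

lemma liftL_injective (n : ℕ) : Function.Injective (liftL n) := by
  intro x y h
  ext i
  have := congrFun h (Fin.castSucc i)
  simpa [liftL] using this

lemma range_liftL (n : ℕ) : LinearMap.range (liftL n) = coordHyperplane n := by
  ext z
  constructor
  · rintro ⟨x, rfl⟩
    simp [liftL, coordHyperplane, LinearMap.mem_ker]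
  · intro hz
    refine ⟨Fin.init z, ?_⟩
    have hz0 : z (Fin.last n) = 0 := hz
    have := Fin.snoc_init_self z
    simp only [liftL, LinearMap.coe_mk, AddHom.coe_mk]
    rw [← hz0, this]

lemma mem_coordHyperplane {n : ℕ} (z : Fin (n + 1) → ℝ) :
    z ∈ coordHyperplane n ↔ z (Fin.last n) = 0 := Iff.rfl

/-- A `(k+1)`-dimensional linear subspace `B` of `ℝⁿ⁺¹` lies in the image of
`j : Graff(k,n) → Gr(k+1,n+1)` iff `B` is not contained in `E_n = span{e_1,…,e_n}`;
consequently `Gr(k+1,n+1)` is the disjoint union of `j(Graff(k,n))` and a subset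
isomorphic to `Gr(k+1,n)`. -/
theorem graffEmbed_image (k n : ℕ) (hkn : k < n) :
    (∀ B : Submodule ℝ (Fin (n + 1) → ℝ), finrank ℝ B = k + 1 →
      ((∃ s : AffineSubspace ℝ (Fin n → ℝ), (s : Set (Fin n → ℝ)).Nonempty ∧
          finrank ℝ s.direction = k ∧ graffEmbed s = B) ↔ ¬ B ≤ coordHyperplane n)) ∧
    Nonempty ({B : Submodule ℝ (Fin (n + 1) → ℝ) //
                finrank ℝ B = k + 1 ∧ B ≤ coordHyperplane n} ≃
              {C : Submodule ℝ (Fin n → ℝ) // finrank ℝ C = k + 1}) := by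
  have hinj := liftL_injective n
  have hrange := range_liftL n
  set u : Fin (n + 1) → ℝ := Pi.single (Fin.last n) 1 with hu
  constructor
  · intro B hB
    constructor
    · -- forward: image avoids the hyperplane
      rintro ⟨s, ⟨x, hx⟩, -, rfl⟩
      intro hle
      have hmem : Fin.snoc x (0:ℝ) + u ∈ graffEmbed s :=
        Submodule.subset_span ⟨x, hx, rfl⟩
      have := hle hmem
      rw [mem_coordHyperplane] at this
      simp [hu, Fin.snoc_last] at this
    · intro hnle
      -- pick v ∈ B with nonzero last coordinate, scale to w with last coord 1
      obtain ⟨v, hvB, hv⟩ : ∃ v ∈ B, v (Fin.last n) ≠ 0 := by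
        by_contra h
        push_neg at h
        exact hnle fun z hz => (mem_coordHyperplane z).mpr (h z hz)
      set w : Fin (n + 1) → ℝ := (v (Fin.last n))⁻¹ • v with hw
      have hwB : w ∈ B := B.smul_mem _ hvB
      have hwlast : w (Fin.last n) = 1 := by
        simp [hw, inv_mul_cancel₀ hv]
      set b : Fin n → ℝ := Fin.init w with hb
      have hwdecomp : liftL n b + u = w := by
        ext i
        induction i using Fin.lastCases with
        | last => simp [liftL, hu, hwlast]
        | cast j =>
          simp [liftL, hu, hb, Fin.init, Pi.single_eq_of_ne (Fin.castSucc_lt_last j).ne]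
      -- the direction
      set A : Submodule ℝ (Fin n → ℝ) := B.comap (liftL n) with hA
      have hmapA : A.map (liftL n) = coordHyperplane n ⊓ B := by
        rw [hA, Submodule.map_comap_eq, hrange]
      -- finrank A = k via rank-nullity
      have hAk : finrank ℝ A = k := by
        have hAeq : finrank ℝ A = finrank ℝ (A.map (liftL n)) :=
          (Submodule.equivMapOfInjective _ hinj A).finrank_eq
        set f : B →ₗ[ℝ] ℝ :=
          (LinearMap.proj (R := ℝ) (φ := fun _ : Fin (n + 1) => ℝ) (Fin.last n)).comp
            B.subtype with hf
        have hker : LinearMap.ker f = (coordHyperplane n).comap B.subtype := by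
          rw [hf, LinearMap.ker_comp]; rfl
        have hsurj : Function.Surjective f := by
          intro c
          refine ⟨c • ⟨w, hwB⟩, ?_⟩
          simp [hf, hwlast]
        have hrangef : finrank ℝ (LinearMap.range f) = 1 := by
          rw [LinearMap.range_eq_top.mpr hsurj]
          simp
        have hrn := LinearMap.finrank_range_add_finrank_ker f
        rw [hrangef, hB] at hrn
        have hkerk : finrank ℝ (LinearMap.ker f) = k := by omega
        have hmapker : (LinearMap.ker f).map B.subtype = B ⊓ coordHyperplane n := by
          rw [hker, Submodule.map_comap_subtype]
        have := Submodule.finrank_map_subtype_eq B (LinearMap.ker f)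
        rw [hmapker] at this
        rw [hAeq, hmapA, inf_comm, this, hkerk]
      refine ⟨AffineSubspace.mk' b A, ⟨b, AffineSubspace.self_mem_mk' b A⟩, ?_, ?_⟩
      · rw [AffineSubspace.direction_mk', hAk]
      · -- graffEmbed (mk' b A) = B
        have hwspan : w ∈ graffEmbed (AffineSubspace.mk' b A) := by
          rw [← hwdecomp]
          exact Submodule.subset_span ⟨b, AffineSubspace.self_mem_mk' b A, rfl⟩
        apply le_antisymm
        · rw [graffEmbed, Submodule.span_le]
          rintro _ ⟨x, hx, rfl⟩
          have hxb : x - b ∈ A := by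
            have := AffineSubspace.mem_mk'.mp hx
            simpa using this
          have h1 : liftL n (x - b) ∈ B := hxb
          have heq : (Fin.snoc x (0:ℝ) + u) = liftL n (x - b) + w := by
            rw [← hwdecomp, map_sub]
            have hx' : Fin.snoc x (0:ℝ) = liftL n x := rfl
            rw [hx']
            abel
          show Fin.snoc x (0:ℝ) + u ∈ B
          rw [heq]
          exact B.add_mem h1 hwB
        · intro z hz
          set c : ℝ := z (Fin.last n) with hc
          have hz' : z - c • w ∈ coordHyperplane n ⊓ B := by
            rw [Submodule.mem_inf]
            constructor
            · show (z - c • w) (Fin.last n) = 0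
              simp [hwlast, hc]
            · exact B.sub_mem hz (B.smul_mem c hwB)
          rw [← hmapA] at hz'
          obtain ⟨a, haA, ha⟩ := hz'
          have hba : b + a ∈ AffineSubspace.mk' b A := by
            apply AffineSubspace.mem_mk'.mpr
            simpa using haA
          have hgen1 : Fin.snoc (b + a) (0:ℝ) + u ∈ graffEmbed (AffineSubspace.mk' b A) :=
            Submodule.subset_span ⟨b + a, hba, rfl⟩
          have hgen2 : Fin.snoc b (0:ℝ) + u ∈ graffEmbed (AffineSubspace.mk' b A) :=
            Submodule.subset_span ⟨b, AffineSubspace.self_mem_mk' b A, rfl⟩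
          have hla : liftL n a ∈ graffEmbed (AffineSubspace.mk' b A) := by
            have : liftL n a = (Fin.snoc (b + a) (0:ℝ) + u) - (Fin.snoc b (0:ℝ) + u) := by
              have : liftL n (b + a) = liftL n b + liftL n a := map_add _ _ _
              show liftL n a = (liftL n (b + a) + u) - (liftL n b + u)
              rw [this]; ring
            rw [this]
            exact Submodule.sub_mem _ hgen1 hgen2
          have : z = liftL n a + c • w := by rw [ha]; ring
          rw [this]
          exact Submodule.add_mem _ hla (Submodule.smul_mem _ c hwspan)
  · -- the equivalence
    refine ⟨⟨fun B => ⟨(B : Submodule ℝ (Fin (n+1) → ℝ)).comap (liftL n), ?_⟩,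
            fun C => ⟨(C : Submodule ℝ (Fin n → ℝ)).map (liftL n), ?_, ?_⟩, ?_, ?_⟩⟩
    · obtain ⟨B, hB, hBp⟩ := B
      have hmc : (B.comap (liftL n)).map (liftL n) = B := by
        rw [Submodule.map_comap_eq, hrange, inf_eq_right.mpr hBp]
      have := (Submodule.equivMapOfInjective _ hinj (B.comap (liftL n))).finrank_eq
      rw [hmc] at this
      rw [this, hB]
    · obtain ⟨C, hC⟩ := C
      have := (Submodule.equivMapOfInjective _ hinj C).finrank_eq
      rw [← this, hC]
    · obtain ⟨C, hC⟩ := C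
      rw [← hrange]
      exact LinearMap.map_le_range
    · rintro ⟨B, hB, hBp⟩
      ext1
      dsimp only
      rw [Submodule.map_comap_eq, hrange, inf_eq_right.mpr hBp]
    · rintro ⟨C, hC⟩
      ext1
      dsimp only
      rw [Submodule.comap_map_eq_of_injective hinj]
end

section
/- The image of the embedding j : Graff(k,n) → Gr(k+1,n+1) is open and dense in Gr(k+1,n+1) (in the manifold topology). -/
open Module

/-- The Grassmannian `Gr(k,n)` in its projection-matrix model: symmetric idempotent
`n × n` real matrices of trace `k` (orthogonal projections onto `k`-dimensional
subspaces of `ℝⁿ`). -/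
def GrMat (k n : ℕ) : Type :=
  {P : Matrix (Fin n) (Fin n) ℝ // P.transpose = P ∧ P * P = P ∧ P.trace = (k : ℝ)}

instance (k n : ℕ) : TopologicalSpace (GrMat k n) :=
  inferInstanceAs (TopologicalSpace
    {P : Matrix (Fin n) (Fin n) ℝ // P.transpose = P ∧ P * P = P ∧ P.trace = (k : ℝ)})

open Matrix in
lemma proj_perturb {N : ℕ} (P : Matrix (Fin N) (Fin N) ℝ)
    (hsym : P.transpose = P) (hidem : P * P = P)
    (u e : Fin N → ℝ) (hu : P.mulVec u = u) (he : P.mulVec e = 0)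
    (hsq : ∑ i, u i * u i = 1) (hesq : ∑ i, e i * e i = 1)
    (hue : ∑ i, u i * e i = 0) (a b : ℝ) (hab : a ^ 2 + b ^ 2 = 1) :
    ((P - vecMulVec u u + vecMulVec (a • u + b • e) (a • u + b • e)).transpose
      = P - vecMulVec u u + vecMulVec (a • u + b • e) (a • u + b • e)) ∧
    ((P - vecMulVec u u + vecMulVec (a • u + b • e) (a • u + b • e)) *
      (P - vecMulVec u u + vecMulVec (a • u + b • e) (a • u + b • e))
      = P - vecMulVec u u + vecMulVec (a • u + b • e) (a • u + b • e)) ∧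
    ((P - vecMulVec u u + vecMulVec (a • u + b • e) (a • u + b • e)).trace = P.trace) ∧
    ((P - vecMulVec u u + vecMulVec (a • u + b • e) (a • u + b • e)).mulVec
      (a • u + b • e) = a • u + b • e) := by
  set w : Fin N → ℝ := a • u + b • e with hw
  set Q : Matrix (Fin N) (Fin N) ℝ := P - vecMulVec u u with hQ
  have hPij : ∀ i j, P i j = P j i := fun i j => congrFun (congrFun hsym j) i
  have hww : ∑ i, w i * w i = 1 := by
    have h1 : ∀ i, w i * w i =
        a ^ 2 * (u i * u i) + (2 * (a * b)) * (u i * e i) + b ^ 2 * (e i * e i) := by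
      intro i; simp only [hw, Pi.add_apply, Pi.smul_apply, smul_eq_mul]; ring
    simp_rw [h1, Finset.sum_add_distrib, ← Finset.mul_sum, hsq, hesq, hue]
    ring_nf; linarith [hab]
  have hmvV : ∀ (v x : Fin N → ℝ), (vecMulVec v v).mulVec x = (∑ m, v m * x m) • v := by
    intro v x; funext i
    simp only [Matrix.mulVec, dotProduct, vecMulVec_apply, Pi.smul_apply,
      smul_eq_mul]
    rw [Finset.sum_mul]
    exact Finset.sum_congr rfl fun m _ => by ring
  have hQu : Q.mulVec u = 0 := by
    rw [hQ, sub_mulVec, hu, hmvV, hsq, one_smul, sub_self]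
  have hQe : Q.mulVec e = 0 := by
    rw [hQ, sub_mulVec, he, hmvV, hue, zero_smul, sub_zero]
  have hQw : Q.mulVec w = 0 := by
    rw [hw, mulVec_add, mulVec_smul, mulVec_smul, hQu, hQe, smul_zero, smul_zero, add_zero]
  have hUt : (vecMulVec u u).transpose = vecMulVec u u := by
    funext i j; simp only [transpose_apply, vecMulVec_apply]; ring
  have hWt : (vecMulVec w w).transpose = vecMulVec w w := by
    funext i j; simp only [transpose_apply, vecMulVec_apply]; ring
  have hQt : Q.transpose = Q := by
    rw [hQ, transpose_sub, hsym, hUt]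
  have hwQ : w ᵥ* Q = 0 := by rw [← mulVec_transpose, hQt, hQw]
  have hQW : Q * vecMulVec w w = 0 := by
    funext i j
    simp only [Matrix.mul_apply, vecMulVec_apply, Matrix.zero_apply]
    have h : ∀ m ∈ Finset.univ, Q i m * (w m * w j) = (Q i m * w m) * w j :=
      fun m _ => by ring
    rw [Finset.sum_congr rfl h, ← Finset.sum_mul]
    have h2 : ∑ m, Q i m * w m = Q.mulVec w i := rfl
    rw [h2, hQw]; simp
  have hWQ : vecMulVec w w * Q = 0 := by
    funext i j
    simp only [Matrix.mul_apply, vecMulVec_apply, Matrix.zero_apply]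
    have h : ∀ m ∈ Finset.univ, (w i * w m) * Q m j = w i * (w m * Q m j) :=
      fun m _ => by ring
    rw [Finset.sum_congr rfl h, ← Finset.mul_sum]
    have h2 : ∑ m, w m * Q m j = (w ᵥ* Q) j := rfl
    rw [h2, hwQ]; simp
  have hvv : ∀ v : Fin N → ℝ, (∑ i, v i * v i) = 1 →
      vecMulVec v v * vecMulVec v v = vecMulVec v v := by
    intro v hv
    funext i j
    simp only [Matrix.mul_apply, vecMulVec_apply]
    have h : ∀ m ∈ Finset.univ, (v i * v m) * (v m * v j) = (v i * v j) * (v m * v m) :=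
      fun m _ => by ring
    rw [Finset.sum_congr rfl h, ← Finset.mul_sum, hv, mul_one]
  have hPU : P * vecMulVec u u = vecMulVec u u := by
    funext i j
    simp only [Matrix.mul_apply, vecMulVec_apply]
    have h : ∀ m ∈ Finset.univ, P i m * (u m * u j) = (P i m * u m) * u j :=
      fun m _ => by ring
    rw [Finset.sum_congr rfl h, ← Finset.sum_mul]
    have h2 : ∑ m, P i m * u m = P.mulVec u i := rfl
    rw [h2, hu]
  have hUP : vecMulVec u u * P = vecMulVec u u := by
    have := congrArg Matrix.transpose hPU
    rwa [transpose_mul, hUt, hsym] at this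
  have hQQ : Q * Q = Q := by
    rw [hQ, sub_mul, mul_sub, mul_sub, hidem, hPU, hUP, hvv u hsq]
    abel
  have htrv : ∀ v : Fin N → ℝ, (vecMulVec v v).trace = ∑ i, v i * v i := by
    intro v; simp [Matrix.trace, Matrix.diag, vecMulVec_apply]
  refine ⟨?_, ?_, ?_, ?_⟩
  · rw [transpose_add, hQt, hWt]
  · rw [add_mul, mul_add, mul_add, hQQ, hQW, hWQ, hvv w hww]; abel
  · rw [trace_add, hQ, trace_sub, htrv, htrv, hsq, hww]; ring
  · rw [add_mulVec, hQw, hmvV, hww, one_smul, zero_add]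
open Matrix in
lemma grmat_range_le_iff {k n : ℕ} (P : GrMat (k + 1) (n + 1)) :
    (LinearMap.range P.1.mulVecLin ≤ coordHyperplane n) ↔
      ∀ j, P.1 (Fin.last n) j = 0 := by
  have hmem : ∀ x : Fin (n + 1) → ℝ, x ∈ coordHyperplane n ↔ x (Fin.last n) = 0 := by
    intro x
    simp [coordHyperplane, LinearMap.mem_ker, LinearMap.proj_apply]
  constructor
  · intro h j
    have h1 : P.1.mulVec (Pi.single j 1) ∈ coordHyperplane n := by
      apply h
      exact ⟨Pi.single j 1, by simp [Matrix.mulVecLin_apply]⟩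
    rw [hmem] at h1
    rw [Matrix.mulVec_single] at h1
    simpa using h1
  · intro h x hx
    obtain ⟨v, rfl⟩ := hx
    rw [hmem, Matrix.mulVecLin_apply]
    show ∑ j, P.1 (Fin.last n) j * v j = 0
    exact Finset.sum_eq_zero fun j _ => by rw [h j, zero_mul]

/-- The image of the embedding `j : Graff(k,n) → Gr(k+1,n+1)` — which, in
the projection-matrix model of `Gr(k+1,n+1)` and by the characterization of the image of
`j`, is the set of `(k+1)`-dimensional subspaces of `ℝⁿ⁺¹` not contained in `E_n` —
is open and dense in `Gr(k+1,n+1)`. -/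
theorem graff_image_open_dense (k n : ℕ) (hkn : k < n) :
    IsOpen {P : GrMat (k + 1) (n + 1) |
        ¬ LinearMap.range P.1.mulVecLin ≤ coordHyperplane n} ∧
    Dense {P : GrMat (k + 1) (n + 1) |
        ¬ LinearMap.range P.1.mulVecLin ≤ coordHyperplane n} := by
  set S := {P : GrMat (k + 1) (n + 1) |
      ¬ LinearMap.range P.1.mulVecLin ≤ coordHyperplane n} with hS
  have hset : S = ⋃ j, (fun P : GrMat (k + 1) (n + 1) => P.1 (Fin.last n) j) ⁻¹' {0}ᶜ := by
    ext P
    simp only [hS, Set.mem_setOf_eq, grmat_range_le_iff, Set.mem_iUnion, Set.mem_preimage,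
      Set.mem_compl_iff, Set.mem_singleton_iff]
    push_neg
    rfl
  constructor
  · rw [hset]
    exact isOpen_iUnion fun j =>
      (((continuous_apply j).comp ((continuous_apply (Fin.last n)).comp
        (continuous_subtype_val (X := Matrix (Fin (n + 1)) (Fin (n + 1)) ℝ)))).isOpen_preimage _ isOpen_compl_singleton)
  · intro P
    by_cases hP : P ∈ S
    · exact subset_closure hP
    have hle : LinearMap.range P.1.mulVecLin ≤ coordHyperplane n := not_not.mp hP
    have hrow : ∀ j, P.1 (Fin.last n) j = 0 := (grmat_range_le_iff P).mp hle
    obtain ⟨M, hsym, hidem, htr⟩ := P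
    have hrow' : ∀ j, M (Fin.last n) j = 0 := hrow
    -- find a diagonal entry ≠ 0
    have htrne : M.trace ≠ 0 := by
      rw [htr]
      exact Nat.cast_ne_zero.mpr (Nat.succ_ne_zero k)
    have hdiag : ∃ i, M i i ≠ 0 := by
      by_contra h
      push_neg at h
      exact htrne (Finset.sum_eq_zero fun i _ => h i)
    obtain ⟨i, hi⟩ := hdiag
    set u0 : Fin (n + 1) → ℝ := fun r => M r i with hu0def
    have hu0 : M.mulVec u0 = u0 := by
      funext r
      show ∑ m, M r m * M m i = M r i
      rw [← Matrix.mul_apply, hidem]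
    have hsumpos : 0 < ∑ m, u0 m * u0 m := by
      have h1 : 0 < u0 i * u0 i := mul_self_pos.mpr hi
      have h2 : u0 i * u0 i ≤ ∑ m, u0 m * u0 m :=
        Finset.single_le_sum (fun m _ => mul_self_nonneg (u0 m)) (Finset.mem_univ i)
      linarith
    set c : ℝ := Real.sqrt (∑ m, u0 m * u0 m) with hc
    have hcpos : 0 < c := Real.sqrt_pos.mpr hsumpos
    have hc2 : c * c = ∑ m, u0 m * u0 m := Real.mul_self_sqrt hsumpos.le
    set u : Fin (n + 1) → ℝ := c⁻¹ • u0 with hudef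
    have hu : M.mulVec u = u := by rw [hudef, Matrix.mulVec_smul, hu0]
    have hsq : ∑ m, u m * u m = 1 := by
      have : ∀ m, u m * u m = c⁻¹ * c⁻¹ * (u0 m * u0 m) := by
        intro m; simp only [hudef, Pi.smul_apply, smul_eq_mul]; ring
      simp_rw [this, ← Finset.mul_sum, ← hc2]
      field_simp
    have hulast : u (Fin.last n) = 0 := by
      simp only [hudef, Pi.smul_apply, smul_eq_mul, hu0def]
      rw [hrow' i, mul_zero]
    set e : Fin (n + 1) → ℝ := Pi.single (Fin.last n) 1 with hedef
    have he : M.mulVec e = 0 := by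
      rw [hedef, Matrix.mulVec_single]
      funext r
      show M r (Fin.last n) * 1 = 0
      rw [mul_one]
      exact (congrFun (congrFun hsym r) (Fin.last n)).symm.trans (hrow' r)
    have hesq : ∑ m, e m * e m = 1 := by
      simp [hedef, Pi.single_apply]
    have hue : ∑ m, u m * e m = 0 := by
      simp [hedef, Pi.single_apply, mul_ite, Finset.sum_ite_eq', hulast]
    -- the perturbation family
    set w : ℝ → (Fin (n + 1) → ℝ) := fun t => Real.sqrt (1 - t ^ 2) • u + t • e with hwdef
    set F : ℝ → Matrix (Fin (n + 1)) (Fin (n + 1)) ℝ :=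
      fun t => M - Matrix.vecMulVec u u + Matrix.vecMulVec (w t) (w t) with hFdef
    have hprops : ∀ t : ℝ, t ^ 2 ≤ 1 →
        (F t).transpose = F t ∧ F t * F t = F t ∧ (F t).trace = M.trace ∧
          (F t).mulVec (w t) = w t := by
      intro t ht
      have hab : Real.sqrt (1 - t ^ 2) ^ 2 + t ^ 2 = 1 := by
        rw [Real.sq_sqrt (by linarith)]; ring
      exact proj_perturb M hsym hidem u e hu he hsq hesq hue _ t hab
    set tseq : ℕ → ℝ := fun m => ((m : ℝ) + 1)⁻¹ with htseq
    have htpos : ∀ m, 0 < tseq m := fun m => by positivity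
    have htle : ∀ m, tseq m ≤ 1 := fun m => by
      rw [htseq]
      rw [inv_le_one_iff₀]
      right; push_cast; linarith [Nat.cast_nonneg (α := ℝ) m]
    have ht2 : ∀ m, (tseq m) ^ 2 ≤ 1 := fun m =>
      pow_le_one₀ (htpos m).le (htle m)
    set seq : ℕ → GrMat (k + 1) (n + 1) := fun m =>
      ⟨F (tseq m), (hprops _ (ht2 m)).1, (hprops _ (ht2 m)).2.1,
        by rw [(hprops _ (ht2 m)).2.2.1, htr]⟩ with hseq
    have hwlast : ∀ t : ℝ, w t (Fin.last n) = t := by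
      intro t
      simp only [hwdef, Pi.add_apply, Pi.smul_apply, smul_eq_mul, hulast, mul_zero, zero_add,
        hedef, Pi.single_eq_same, mul_one]
    have hmem : ∀ m, seq m ∈ S := by
      intro m
      simp only [hS, Set.mem_setOf_eq]
      intro hle'
      have hwmem : w (tseq m) ∈ LinearMap.range (F (tseq m)).mulVecLin :=
        ⟨w (tseq m), by rw [Matrix.mulVecLin_apply, (hprops _ (ht2 m)).2.2.2]⟩
      have := hle' hwmem
      simp only [coordHyperplane, LinearMap.mem_ker, LinearMap.proj_apply] at this
      rw [hwlast] at this
      exact (htpos m).ne' this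
    -- convergence
    have hwc : Continuous fun t : ℝ => Real.sqrt (1 - t ^ 2) :=
      Real.continuous_sqrt.comp (by continuity)
    have hA : ∀ r, Continuous fun t : ℝ => w t r := by
      intro r
      simp only [hwdef, Pi.add_apply, Pi.smul_apply, smul_eq_mul]
      exact (hwc.mul continuous_const).add (continuous_id.mul continuous_const)
    have hF : Continuous F := by
      apply continuous_pi; intro r
      apply continuous_pi; intro s
      have : (fun t => F t r s) = fun t => (M r s - u r * u s) + w t r * w t s := by
        funext t
        simp [hFdef, Matrix.add_apply, Matrix.sub_apply, Matrix.vecMulVec_apply]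
      rw [this]
      exact continuous_const.add ((hA r).mul (hA s))
    have hF0 : F 0 = M := by
      have hw0 : w 0 = u := by
        funext r
        simp [hwdef]
      rw [hFdef]
      simp only [hw0]
      abel
    have htt : Filter.Tendsto tseq Filter.atTop (nhds 0) := by
      rw [htseq]
      exact tendsto_one_div_add_atTop_nhds_zero_nat.congr fun m => by rw [one_div]
    have htend : Filter.Tendsto seq Filter.atTop (nhds ⟨M, hsym, hidem, htr⟩) := by
      apply (tendsto_subtype_rng (X := Matrix (Fin (n + 1)) (Fin (n + 1)) ℝ)).mpr
      have : Filter.Tendsto (fun m => F (tseq m)) Filter.atTop (nhds (F 0)) :=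
        (hF.tendsto 0).comp htt
      rwa [hF0] at this
    exact mem_closure_of_tendsto htend (Filter.Eventually.of_forall hmem)
end

section
/- The map sending an affine subspace A + b ∈ Graff(k,n) to the pair [P, b₀] ∈ ℝ^{n×n} × ℝ^n, where P is the orthogonal projection onto the linear part A and b₀ is the component of b orthogonal to A, is a bijection from Graff(k,n) onto the set {[P, d] : P^T = P² = P, tr(P) = k, Pd = 0}. -/
open Module Matrix

/-- The Grassmannian of `k`-dimensional affine subspaces of `ℝⁿ`. -/
def Graff (k n : ℕ) : Type :=
  {s : AffineSubspace ℝ (Fin n → ℝ) //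
    (s : Set (Fin n → ℝ)).Nonempty ∧ finrank ℝ s.direction = k}

/-- Projection affine coordinates: pairs `[P, d]` with `P` symmetric idempotent of
trace `k` and `P d = 0`. -/
def ProjCoords (k n : ℕ) : Type :=
  {x : Matrix (Fin n) (Fin n) ℝ × (Fin n → ℝ) //
    x.1.transpose = x.1 ∧ x.1 * x.1 = x.1 ∧ x.1.trace = (k : ℝ) ∧ x.1.mulVec x.2 = 0}

noncomputable section GraffAux

abbrev Eucl (n : ℕ) := EuclideanSpace ℝ (Fin n)

def projL (n : ℕ) (A : Submodule ℝ (Eucl n)) : Eucl n →ₗ[ℝ] Eucl n :=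
  (A.subtypeL.comp (A.orthogonalProjectionOnto) : Eucl n →L[ℝ] Eucl n)

def projMat (n : ℕ) (A : Submodule ℝ (Eucl n)) : Matrix (Fin n) (Fin n) ℝ :=
  Matrix.toEuclideanLin.symm (projL n A)

lemma projMat_mulVec (n : ℕ) (A : Submodule ℝ (Eucl n)) (v : Eucl n) :
    (projMat n A).mulVec v = WithLp.ofLp (A.orthogonalProjectionOnto v : Eucl n) := by
  have : Matrix.toEuclideanLin (projMat n A) v = projL n A v := by
    rw [projMat, LinearEquiv.apply_symm_apply]
  exact congrArg WithLp.ofLp this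

lemma projL_apply_of_mem (n : ℕ) (A : Submodule ℝ (Eucl n)) {x : Eucl n} (hx : x ∈ A) :
    projL n A x = x :=
  (Submodule.starProjection_eq_self_iff (K := A) (v := x)).mpr hx

lemma projL_isProj (n : ℕ) (A : Submodule ℝ (Eucl n)) : LinearMap.IsProj A (projL n A) :=
  ⟨fun x => (A.orthogonalProjectionOnto x).2, fun _ hx => projL_apply_of_mem n A hx⟩

lemma projMat_idem (n : ℕ) (A : Submodule ℝ (Eucl n)) :
    projMat n A * projMat n A = projMat n A := by
  have h : ∀ v : Eucl n, (projMat n A * projMat n A).mulVec v = (projMat n A).mulVec v := by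
    intro v
    rw [← Matrix.mulVec_mulVec, projMat_mulVec, projMat_mulVec]
    exact congrArg WithLp.ofLp (projL_apply_of_mem n A (A.orthogonalProjectionOnto v).2)
  ext i j
  simpa [Matrix.mulVec_single] using congrFun (h (WithLp.toLp 2 (Pi.single j 1))) i

lemma projMat_trace (n : ℕ) (A : Submodule ℝ (Eucl n)) :
    (projMat n A).trace = (finrank ℝ A : ℝ) := by
  have hm : (LinearMap.toMatrix (PiLp.basisFun 2 ℝ (Fin n)) (PiLp.basisFun 2 ℝ (Fin n)))
      (projL n A) = projMat n A := by
    apply (Matrix.toLin (PiLp.basisFun 2 ℝ (Fin n)) (PiLp.basisFun 2 ℝ (Fin n))).injective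
    rw [Matrix.toLin_toMatrix, ← Matrix.toEuclideanLin_eq_toLin, projMat,
      LinearEquiv.apply_symm_apply]
  rw [← (projL_isProj n A).trace,
    LinearMap.trace_eq_matrix_trace ℝ (PiLp.basisFun 2 ℝ (Fin n)) (projL n A), hm]

lemma projMat_symm (n : ℕ) (A : Submodule ℝ (Eucl n)) : (projMat n A)ᵀ = projMat n A := by
  have h : (projMat n A).IsHermitian := by
    rw [Matrix.isHermitian_iff_isSymmetric, projMat, LinearEquiv.apply_symm_apply]
    exact Submodule.starProjection_isSymmetric A
  rw [Matrix.IsHermitian, Matrix.conjTranspose_eq_transpose_of_trivial] at h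
  exact h

lemma isHermitian_of_symm (n : ℕ) (P : Matrix (Fin n) (Fin n) ℝ) (hs : Pᵀ = P) :
    P.IsHermitian := by
  ext i j
  rw [Matrix.conjTranspose_apply, star_trivial]
  exact congrFun (congrFun hs i) j

lemma projMat_of_range (n : ℕ) (P : Matrix (Fin n) (Fin n) ℝ)
    (hs : Pᵀ = P) (hi : P * P = P) :
    projMat n (LinearMap.range (Matrix.toEuclideanLin P)) = P := by
  set L := Matrix.toEuclideanLin P with hL
  set A := LinearMap.range L with hA
  have hsymm : L.IsSymmetric := by
    rw [hL, ← Matrix.isHermitian_iff_isSymmetric]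
    exact isHermitian_of_symm n P hs
  have hLL : ∀ v : Eucl n, L (L v) = L v := by
    intro v
    have : P.mulVec (P.mulVec v) = P.mulVec v := by
      rw [Matrix.mulVec_mulVec, hi]
    exact congrArg (WithLp.toLp 2) this
  have key : ∀ v : Eucl n, (projMat n A).mulVec v = WithLp.ofLp (L v) := by
    intro v
    rw [projMat_mulVec]
    have hmem : L v ∈ A := ⟨v, rfl⟩
    have horth : v - L v ∈ Aᗮ := by
      rw [Submodule.mem_orthogonal]
      rintro _ ⟨w, rfl⟩
      rw [hsymm w (v - L v), map_sub, hLL, sub_self, inner_zero_right]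
    have := Submodule.eq_starProjection_of_mem_orthogonal (K := A) hmem horth
    rw [← Submodule.starProjection_apply, this]
  ext i j
  have h1 := congrFun (key (WithLp.toLp 2 (Pi.single j 1))) i
  have h2 : WithLp.ofLp (L (WithLp.toLp 2 (Pi.single j 1))) = P.mulVec (Pi.single j 1) := rfl
  rw [h2] at h1
  simpa [Matrix.mulVec_single] using h1

/-- Transport a submodule of `Fin n → ℝ` to the Euclidean space side. -/
def toE (n : ℕ) (A : Submodule ℝ (Fin n → ℝ)) : Submodule ℝ (Eucl n) :=
  A.comap (WithLp.linearEquiv 2 ℝ (Fin n → ℝ)).toLinearMap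

lemma mem_toE (n : ℕ) (A : Submodule ℝ (Fin n → ℝ)) (x : Eucl n) :
    x ∈ toE n A ↔ WithLp.equiv 2 (Fin n → ℝ) x ∈ A := Iff.rfl

lemma finrank_toE (n : ℕ) (A : Submodule ℝ (Fin n → ℝ)) :
    finrank ℝ (toE n A) = finrank ℝ A := by
  rw [toE, Submodule.comap_equiv_eq_map_symm, LinearEquiv.finrank_map_eq]

lemma projMat_fix_iff (n : ℕ) (A : Submodule ℝ (Fin n → ℝ)) (u : Fin n → ℝ) :
    (projMat n (toE n A)).mulVec u = u ↔ u ∈ A := by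
  constructor
  · intro h
    have h' := projMat_mulVec n (toE n A) (WithLp.toLp 2 u)
    simp only [WithLp.ofLp_toLp] at h'
    have : (projMat n (toE n A)).mulVec u ∈ A := by
      rw [h']; exact ((toE n A).orthogonalProjectionOnto (WithLp.toLp 2 u)).2
    rw [h] at this
    exact this
  · intro h
    have hu : WithLp.toLp 2 u ∈ toE n A := h
    have := projL_apply_of_mem n (toE n A) hu
    have h' := projMat_mulVec n (toE n A) (WithLp.toLp 2 u)
    simp only [WithLp.ofLp_toLp] at h'
    rw [h', ← Submodule.starProjection_apply,
      (Submodule.starProjection_eq_self_iff (K := toE n A)).mpr hu]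

/-- Characterization of membership in an affine subspace via its projection coordinates. -/
lemma mem_iff_proj_char (n : ℕ) (s : AffineSubspace ℝ (Fin n → ℝ)) {b : Fin n → ℝ}
    (hb : b ∈ s) (v : Fin n → ℝ) :
    v ∈ s ↔ v - (projMat n (toE n s.direction)).mulVec v
      = b - (projMat n (toE n s.direction)).mulVec b := by
  set P := projMat n (toE n s.direction) with hP
  rw [← AffineSubspace.vsub_right_mem_direction_iff_mem hb v,
    ← projMat_fix_iff n s.direction (v -ᵥ b)]
  have hvsub : (v -ᵥ b : Fin n → ℝ) = v - b := rfl
  rw [hvsub, Matrix.mulVec_sub]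
  constructor
  · intro h
    have h1 := sub_eq_sub_iff_sub_eq_sub.mp h
    linear_combination -h
  · intro h
    linear_combination -h

lemma trace_of_idem (n : ℕ) (P : Matrix (Fin n) (Fin n) ℝ) (hi : P * P = P) :
    ((finrank ℝ (LinearMap.range (Matrix.toLin' P)) : ℕ) : ℝ) = P.trace := by
  have hproj : LinearMap.IsProj (LinearMap.range (Matrix.toLin' P)) (Matrix.toLin' P) := by
    refine ⟨fun x => ⟨x, rfl⟩, ?_⟩
    rintro _ ⟨w, rfl⟩
    rw [← LinearMap.comp_apply, ← Matrix.toLin'_mul, hi]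
  rw [← hproj.trace, LinearMap.trace_eq_matrix_trace ℝ (Pi.basisFun ℝ (Fin n))]
  congr 1
  apply (Matrix.toLin (Pi.basisFun ℝ (Fin n)) (Pi.basisFun ℝ (Fin n))).injective
  rw [Matrix.toLin_toMatrix, Matrix.toLin_eq_toLin']

lemma toE_range_toLin' (n : ℕ) (P : Matrix (Fin n) (Fin n) ℝ) :
    toE n (LinearMap.range (Matrix.toLin' P)) = LinearMap.range (Matrix.toEuclideanLin P) := by
  ext x
  constructor
  · rintro ⟨w, hw⟩
    exact ⟨WithLp.toLp 2 w, congrArg (WithLp.toLp 2) hw⟩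
  · rintro ⟨w, hw⟩
    exact ⟨w.ofLp, congrArg WithLp.ofLp hw⟩

end GraffAux

/-- The map sending an affine subspace `A + b ∈ Graff(k,n)` to the pair
`[P, b₀]`, where `P` is the orthogonal projection onto the direction `A` and `b₀` is the
component of `b` orthogonal to `A`, is a bijection onto
`{[P, d] : Pᵀ = P² = P, tr(P) = k, P d = 0}`.  The map is pinned down by the
characterization `v ∈ A + b ↔ v - P v = b₀` of the affine subspace in terms of its
projection affine coordinates. -/
theorem graff_projCoords_bijection (k n : ℕ) (hkn : k ≤ n) :
    ∃ f : Graff k n → ProjCoords k n, Function.Bijective f ∧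
      ∀ (s : Graff k n) (v : Fin n → ℝ),
        v ∈ s.1 ↔ v - (f s).1.1.mulVec v = (f s).1.2 := by
  classical
  refine ⟨fun s => ⟨(projMat n (toE n s.1.direction),
      s.2.1.choose - (projMat n (toE n s.1.direction)).mulVec s.2.1.choose),
      projMat_symm n _, projMat_idem n _,
      by rw [projMat_trace, finrank_toE, s.2.2],
      by simp only; rw [Matrix.mulVec_sub, Matrix.mulVec_mulVec, projMat_idem, sub_self]⟩,
    ⟨?_, ?_⟩, ?_⟩
  · -- injective
    intro s t h
    have hP := congrArg (fun x => x.1.1) h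
    have hd := congrArg (fun x => x.1.2) h
    simp only at hP hd
    apply Subtype.ext
    apply SetLike.ext
    intro v
    rw [mem_iff_proj_char n s.1 s.2.1.choose_spec v,
      mem_iff_proj_char n t.1 t.2.1.choose_spec v, hd, hP]
  · -- surjective
    rintro ⟨⟨P, d⟩, hsym, hidem, htr, hd0⟩
    simp only at hsym hidem htr hd0
    set A₀ := LinearMap.range (Matrix.toLin' P) with hA₀
    have hdmem : d ∈ AffineSubspace.mk' d A₀ := AffineSubspace.self_mem_mk' d A₀
    have hfr : finrank ℝ A₀ = k := by
      have := trace_of_idem n P hidem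
      rw [htr] at this
      exact_mod_cast this
    have hgen : ∀ b ∈ AffineSubspace.mk' d A₀, b - P.mulVec b = d := by
      intro b hb
      obtain ⟨w, hw⟩ := AffineSubspace.mem_mk'.mp hb
      have hw' : P.mulVec w = b - d := by
        rw [← Matrix.toLin'_apply]; exact hw
      have hPd : P.mulVec d = 0 := hd0
      have hbd : b = (b - d) + d := by ring
      have hPb : P.mulVec b = b - d := by
        conv_lhs => rw [hbd]
        rw [Matrix.mulVec_add, hPd, add_zero, ← hw', Matrix.mulVec_mulVec, hidem]
      rw [hPb, sub_sub_cancel]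
    have hdir : finrank ℝ (AffineSubspace.mk' d A₀).direction = k := by
      rw [AffineSubspace.direction_mk']; exact hfr
    refine ⟨⟨AffineSubspace.mk' d A₀, ⟨d, hdmem⟩, hdir⟩, ?_⟩
    apply Subtype.ext
    have hPeq : projMat n (toE n (AffineSubspace.mk' d A₀).direction) = P := by
      rw [AffineSubspace.direction_mk', hA₀, toE_range_toLin',
        projMat_of_range n P hsym hidem]
    simp only
    rw [hPeq]
    exact Prod.ext rfl (hgen _ (Exists.choose_spec (⟨d, hdmem⟩ : ((AffineSubspace.mk' d A₀ :
      AffineSubspace ℝ (Fin n → ℝ)) : Set (Fin n → ℝ)).Nonempty)))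
  · -- characterization
    intro s v
    exact mem_iff_proj_char n s.1 s.2.1.choose_spec v
end

section
/- Fix a flag of linear subspaces A₁ ⊆ ... ⊆ A_k in ℝ^n, a linear subspace B with dim(B ∩ A_j) ≥ j for all j, and a vector b ∈ ℝ^n. Then the set C(B,b) = {c ∈ ℝ^n : dim((B + c) ∩ (A_j + b)) ≥ j for all j = 1,...,k} is a convex subset of ℝ^n. -/
open Module

/-- Fix a flag of linear subspaces `A₁ ⊆ ⋯ ⊆ A_k` in `ℝⁿ`, a linear
subspace `B` with `dim(B ∩ A_j) ≥ j` for all `j`, and `b ∈ ℝⁿ`.  Then the set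
`C(B,b) = {c : dim((B + c) ∩ (A_j + b)) ≥ j for all j}` is convex.  (The dimension of a
nonempty intersection of affine subspaces is the dimension of its direction; an empty
intersection has direction `⊥`, of dimension `0 < j`.) -/
theorem cbb_convex (n k : ℕ)
    (A : Fin k → Submodule ℝ (Fin n → ℝ)) (hA : Monotone A)
    (B : Submodule ℝ (Fin n → ℝ)) (b : Fin n → ℝ)
    (hB : ∀ j : Fin k, (j : ℕ) + 1 ≤ finrank ℝ ↥(B ⊓ A j)) :
    Convex ℝ {c : Fin n → ℝ | ∀ j : Fin k,
      (j : ℕ) + 1 ≤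
        finrank ℝ ↥(AffineSubspace.mk' c B ⊓ AffineSubspace.mk' b (A j)).direction} := by
  -- helper: the condition for c at index j forces the intersection to be nonempty
  have hne : ∀ (c : Fin n → ℝ) (j : Fin k),
      (j : ℕ) + 1 ≤
          finrank ℝ ↥(AffineSubspace.mk' c B ⊓ AffineSubspace.mk' b (A j)).direction →
      ∃ x, x ∈ AffineSubspace.mk' c B ⊓ AffineSubspace.mk' b (A j) := by
    intro c j hj
    by_contra h
    push_neg at h
    have hempty : (↑(AffineSubspace.mk' c B ⊓ AffineSubspace.mk' b (A j) :
        AffineSubspace ℝ (Fin n → ℝ)) : Set (Fin n → ℝ)) = ∅ :=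
      Set.eq_empty_iff_forall_notMem.mpr h
    have : (AffineSubspace.mk' c B ⊓ AffineSubspace.mk' b (A j)).direction = ⊥ := by
      rw [AffineSubspace.direction_eq_vectorSpan, hempty, vectorSpan_empty]
    rw [this] at hj
    simp at hj
  intro c₁ hc₁ c₂ hc₂ a t ha ht hat
  intro j
  obtain ⟨x₁, hx₁B, hx₁A⟩ := hne c₁ j (hc₁ j)
  obtain ⟨x₂, hx₂B, hx₂A⟩ := hne c₂ j (hc₂ j)
  set x : Fin n → ℝ := a • x₁ + t • x₂ with hx
  have hxB : x ∈ AffineSubspace.mk' (a • c₁ + t • c₂) B := by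
    rw [AffineSubspace.mem_mk']
    have h₁ : x₁ -ᵥ c₁ ∈ B := (AffineSubspace.mem_mk').1 hx₁B
    have h₂ : x₂ -ᵥ c₂ ∈ B := (AffineSubspace.mem_mk').1 hx₂B
    have : x -ᵥ (a • c₁ + t • c₂) = a • (x₁ -ᵥ c₁) + t • (x₂ -ᵥ c₂) := by
      simp only [vsub_eq_sub, hx]
      module
    rw [this]
    exact B.add_mem (B.smul_mem _ h₁) (B.smul_mem _ h₂)
  have hxA : x ∈ AffineSubspace.mk' b (A j) := by
    rw [AffineSubspace.mem_mk']
    have h₁ : x₁ -ᵥ b ∈ A j := (AffineSubspace.mem_mk').1 hx₁A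
    have h₂ : x₂ -ᵥ b ∈ A j := (AffineSubspace.mem_mk').1 hx₂A
    have : x -ᵥ b = a • (x₁ -ᵥ b) + t • (x₂ -ᵥ b) := by
      simp only [vsub_eq_sub, hx]
      have : a + t = 1 := hat
      match_scalars <;> nlinarith [this]
    rw [this]
    exact (A j).add_mem ((A j).smul_mem _ h₁) ((A j).smul_mem _ h₂)
  have hdir := AffineSubspace.direction_inf_of_mem hxB hxA
  show (j:ℕ)+1 ≤ _
  rw [hdir, AffineSubspace.direction_mk', AffineSubspace.direction_mk']
  exact hB j
end

section
/- With notation as in the affine Schubert variety setting, the fiber τ_b^{-1}(B) = {B + c ∈ Graff(k,n) : dim((B + c) ∩ (A_j + b)) ≥ j, j = 1,...,k} is contractible (indeed convex as a subset of the quotient ℝ^n/B). -/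
open Module

lemma fiber_eq_aux (n k : ℕ)
    (A : Fin k → Submodule ℝ (Fin n → ℝ))
    (B : Submodule ℝ (Fin n → ℝ)) (b : Fin n → ℝ)
    (hB : ∀ j : Fin k, (j : ℕ) + 1 ≤ finrank ℝ ↥(B ⊓ A j)) :
    {c : Fin n → ℝ | ∀ j : Fin k,
        (j : ℕ) + 1 ≤
          finrank ℝ ↥(AffineSubspace.mk' c B ⊓ AffineSubspace.mk' b (A j)).direction}
      = {c : Fin n → ℝ | ∀ j : Fin k, c - b ∈ B ⊔ A j} := by
  ext c
  simp only [Set.mem_setOf_eq]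
  constructor
  · intro h j
    rcases (AffineSubspace.mk' c B ⊓ AffineSubspace.mk' b (A j)).eq_bot_or_nonempty with
      hbot | ⟨p, hp⟩
    · exfalso
      have := h j
      rw [hbot, AffineSubspace.direction_bot] at this
      simp at this
    · obtain ⟨hp1, hp2⟩ := hp
      have h1 : p - c ∈ B := AffineSubspace.mem_mk'.1 hp1
      have h2 : p - b ∈ A j := AffineSubspace.mem_mk'.1 hp2
      have : c - b = -(p - c) + (p - b) := by ring_nf
      rw [this]
      exact add_mem (Submodule.mem_sup_left (neg_mem h1)) (Submodule.mem_sup_right h2)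
  · intro h j
    rcases Submodule.mem_sup.1 (h j) with ⟨u, hu, v, hv, huv⟩
    have hp1 : (c - u) ∈ AffineSubspace.mk' c B :=
      AffineSubspace.mem_mk'.2 (by simpa using neg_mem hu)
    have hp2 : (c - u) ∈ AffineSubspace.mk' b (A j) := by
      refine AffineSubspace.mem_mk'.2 ?_
      have : c - u - b = v := by
        have : c - b = u + v := huv.symm
        rw [show c - u - b = (c - b) - u by ring, this]; ring
      simpa [this] using hv
    have hd : (AffineSubspace.mk' c B ⊓ AffineSubspace.mk' b (A j)).direction = B ⊓ A j := by
      rw [AffineSubspace.direction_inf_of_mem hp1 hp2,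
        AffineSubspace.direction_mk', AffineSubspace.direction_mk']
    rw [hd]
    exact hB j

/-- With `A₁ ⊆ ⋯ ⊆ A_k` a flag of linear subspaces of `ℝⁿ`, `b ∈ ℝⁿ`, and
`B` a linear subspace with `dim(B ∩ A_j) ≥ j` for all `j`, the fiber
`τ_b⁻¹(B) = {B + c : dim((B+c) ∩ (A_j+b)) ≥ j, j = 1,…,k}` of the deaffine map over `B` —
identified via `c ↦ c mod B` with the subset `C(B,b)/B` of `ℝⁿ/B` — is convex and
contractible. -/
theorem fiber_convex_contractible (n k : ℕ)
    (A : Fin k → Submodule ℝ (Fin n → ℝ)) (hA : Monotone A)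
    (B : Submodule ℝ (Fin n → ℝ)) (b : Fin n → ℝ)
    (hB : ∀ j : Fin k, (j : ℕ) + 1 ≤ finrank ℝ ↥(B ⊓ A j)) :
    Convex ℝ (B.mkQ '' {c : Fin n → ℝ | ∀ j : Fin k,
        (j : ℕ) + 1 ≤
          finrank ℝ ↥(AffineSubspace.mk' c B ⊓ AffineSubspace.mk' b (A j)).direction}) ∧
    ContractibleSpace ↥(B.mkQ '' {c : Fin n → ℝ | ∀ j : Fin k,
        (j : ℕ) + 1 ≤
          finrank ℝ ↥(AffineSubspace.mk' c B ⊓ AffineSubspace.mk' b (A j)).direction}) := by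
  rw [fiber_eq_aux n k A B b hB]
  have hconv : Convex ℝ {c : Fin n → ℝ | ∀ j : Fin k, c - b ∈ B ⊔ A j} := by
    intro x hx y hy a a' ha ha' haa j
    have hb1 : a • b + a' • b = b := by rw [← add_smul, haa, one_smul]
    have : a • x + a' • y - b = a • (x - b) + a' • (y - b) := by
      conv_lhs => rw [← hb1]
      rw [smul_sub, smul_sub]; abel
    rw [this]
    exact add_mem (Submodule.smul_mem _ _ (hx j)) (Submodule.smul_mem _ _ (hy j))
  have hconv' := hconv.linear_image B.mkQ
  refine ⟨hconv', hconv'.contractibleSpace ⟨B.mkQ b, b, fun j => by simp, rfl⟩⟩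
end

section
/- If [A, b₀] and [A', b₀'] are two orthogonal affine coordinates of the same affine subspace A + b ∈ Graff(k,n), then the corresponding Stiefel coordinate matrices Y and Y' in V(k+1, n+1) satisfy Y = Y'Q for some Q ∈ O(k+1) of the block form diag(Q', 1) with Q' ∈ O(k). In particular, the Stiefel coordinate matrix of an affine subspace is unique up to right multiplication by such an orthogonal matrix. -/
open Matrix

/-- The affine subspace `{A x + b : x ∈ ℝᵏ}` of `ℝⁿ`. -/
def affSet {n k : ℕ} (A : Matrix (Fin n) (Fin k) ℝ) (b : Fin n → ℝ) : Set (Fin n → ℝ) :=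
  Set.range fun x => A.mulVec x + b

/-- The matrix of Stiefel coordinates `[[A, b₀/√(1+‖b₀‖²)], [0, 1/√(1+‖b₀‖²)]]` of an
affine subspace with orthogonal affine coordinates `[A, b₀]`. -/
noncomputable def stiefelCoords {n k : ℕ} (A : Matrix (Fin n) (Fin k) ℝ)
    (b : Fin n → ℝ) : Matrix (Fin (n + 1)) (Fin (k + 1)) ℝ :=
  fun i j =>
    Fin.lastCases
      (Fin.lastCases (1 / Real.sqrt (1 + ∑ t, b t ^ 2))
        (fun i' => b i' / Real.sqrt (1 + ∑ t, b t ^ 2)) i)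
      (fun j' => Fin.lastCases 0 (fun i' => A i' j') i) j

lemma finSumFinEquiv_symm_castSucc {k : ℕ} (x : Fin k) :
    finSumFinEquiv.symm (Fin.castSucc x) = Sum.inl x :=
  finSumFinEquiv_symm_apply_castAdd x

/-- If `[A, b₀]` and `[A', b₀']` are two orthogonal affine coordinates of
the same affine subspace, then the corresponding Stiefel coordinate matrices `Y`, `Y'`
satisfy `Y = Y' Q` for some orthogonal `Q ∈ O(k+1)` of block form `diag(Q', 1)` with
`Q' ∈ O(k)`. -/
theorem stiefelCoords_unique_up_to_orthogonal (n k : ℕ)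
    (A A' : Matrix (Fin n) (Fin k) ℝ) (b₀ b₀' : Fin n → ℝ)
    (hA : A.transpose * A = 1) (hA' : A'.transpose * A' = 1)
    (hb : A.transpose.mulVec b₀ = 0) (hb' : A'.transpose.mulVec b₀' = 0)
    (hsame : affSet A b₀ = affSet A' b₀') :
    ∃ Q' : Matrix (Fin k) (Fin k) ℝ, Q'.transpose * Q' = 1 ∧
      stiefelCoords A b₀ =
        stiefelCoords A' b₀' *
          (Matrix.reindex finSumFinEquiv finSumFinEquiv
            (Matrix.fromBlocks Q' 0 0 (1 : Matrix (Fin 1) (Fin 1) ℝ))) := by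
  classical
  have hmem : ∀ w : Fin k → ℝ, ∃ z : Fin k → ℝ, A' *ᵥ z + b₀' = A *ᵥ w + b₀ := by
    intro w
    have : (A *ᵥ w + b₀) ∈ affSet A' b₀' := hsame ▸ ⟨w, rfl⟩
    exact this
  have hmem' : ∀ w : Fin k → ℝ, ∃ z : Fin k → ℝ, A *ᵥ z + b₀ = A' *ᵥ w + b₀' := by
    intro w
    have : (A' *ᵥ w + b₀') ∈ affSet A b₀ := hsame ▸ ⟨w, rfl⟩
    exact this
  obtain ⟨x, hx⟩ := hmem 0
  rw [mulVec_zero, zero_add] at hx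
  -- hx : A' *ᵥ x + b₀' = b₀
  have hrange : ∀ w : Fin k → ℝ, ∃ z : Fin k → ℝ, A' *ᵥ z = A *ᵥ w := by
    intro w
    obtain ⟨z, hz⟩ := hmem w
    refine ⟨z - x, ?_⟩
    have : A' *ᵥ (z - x) = (A' *ᵥ z + b₀') - (A' *ᵥ x + b₀') := by
      rw [mulVec_sub]; abel
    rw [this, hz, hx]; abel
  obtain ⟨y, hy⟩ := hmem' 0
  rw [mulVec_zero, zero_add] at hy
  have hrange' : ∀ w : Fin k → ℝ, ∃ z : Fin k → ℝ, A *ᵥ z = A' *ᵥ w := by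
    intro w
    obtain ⟨z, hz⟩ := hmem' w
    refine ⟨z - y, ?_⟩
    have : A *ᵥ (z - y) = (A *ᵥ z + b₀) - (A *ᵥ y + b₀) := by
      rw [mulVec_sub]; abel
    rw [this, hz, hy]; abel
  -- A'ᵀ b₀ = 0
  have hA'b : A'ᵀ *ᵥ b₀ = 0 := by
    funext j
    obtain ⟨z, hz⟩ := hrange' (Pi.single j 1)
    have h1 : (A'ᵀ *ᵥ b₀) j = b₀ ⬝ᵥ (A' *ᵥ Pi.single j 1) := by
      rw [mulVec_single_one]
      simp [mulVec, dotProduct, mul_comm]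
    rw [h1, ← hz, dotProduct_mulVec, ← mulVec_transpose, hb]
    simp
  -- deduce b₀ = b₀'
  have hbb : b₀ = b₀' := by
    have h2 : A'ᵀ *ᵥ (A' *ᵥ x) = x := by
      rw [mulVec_mulVec, hA', one_mulVec]
    have h3 : A' *ᵥ x = b₀ - b₀' := by rw [← hx]; abel
    have h4 : x = 0 := by
      rw [h3, mulVec_sub, hA'b, hb'] at h2
      simpa using h2.symm
    rw [h4, mulVec_zero, zero_add] at hx
    exact hx.symm
  -- A' * (A'ᵀ * A) = A
  have hAQ : A' * (A'ᵀ * A) = A := by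
    have hcol : ∀ w : Fin k → ℝ, (A' * (A'ᵀ * A)) *ᵥ w = A *ᵥ w := by
      intro w
      obtain ⟨z, hz⟩ := hrange w
      calc (A' * (A'ᵀ * A)) *ᵥ w = A' *ᵥ (A'ᵀ *ᵥ (A *ᵥ w)) := by
            rw [mulVec_mulVec, mulVec_mulVec, Matrix.mul_assoc]
        _ = A' *ᵥ (A'ᵀ *ᵥ (A' *ᵥ z)) := by rw [hz]
        _ = A' *ᵥ z := by rw [mulVec_mulVec (M := A'ᵀ), hA', one_mulVec]
        _ = A *ᵥ w := hz
    ext i j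
    have := congrFun (hcol (Pi.single j 1)) i
    simpa [mulVec_single_one] using this
  have hQ : (A'ᵀ * A)ᵀ * (A'ᵀ * A) = 1 := by
    rw [transpose_mul, transpose_transpose, Matrix.mul_assoc, hAQ, hA]
  refine ⟨A'ᵀ * A, hQ, ?_⟩
  subst hbb
  ext i j
  rw [Matrix.mul_apply, Fin.sum_univ_castSucc]
  refine Fin.lastCases ?_ (fun j' => ?_) j
  · have h5 : ∀ l' : Fin k,
        (Matrix.reindex finSumFinEquiv finSumFinEquiv
          (Matrix.fromBlocks (A'ᵀ * A) 0 0 (1 : Matrix (Fin 1) (Fin 1) ℝ)))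
          (Fin.castSucc l') (Fin.last k) = 0 := by
      intro l'
      simp [Matrix.reindex_apply, Matrix.submatrix_apply, finSumFinEquiv_symm_castSucc]
    have h6 : (Matrix.reindex finSumFinEquiv finSumFinEquiv
          (Matrix.fromBlocks (A'ᵀ * A) 0 0 (1 : Matrix (Fin 1) (Fin 1) ℝ)))
          (Fin.last k) (Fin.last k) = 1 := by
      simp [Matrix.reindex_apply, Matrix.submatrix_apply, Matrix.one_apply]
    simp [h5, h6]
    simp [stiefelCoords]
  · have h5 : ∀ l' : Fin k,
        (Matrix.reindex finSumFinEquiv finSumFinEquiv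
          (Matrix.fromBlocks (A'ᵀ * A) 0 0 (1 : Matrix (Fin 1) (Fin 1) ℝ)))
          (Fin.castSucc l') (Fin.castSucc j') = (A'ᵀ * A) l' j' := by
      intro l'
      simp [Matrix.reindex_apply, Matrix.submatrix_apply, finSumFinEquiv_symm_castSucc]
    have h6 : (Matrix.reindex finSumFinEquiv finSumFinEquiv
          (Matrix.fromBlocks (A'ᵀ * A) 0 0 (1 : Matrix (Fin 1) (Fin 1) ℝ)))
          (Fin.last k) (Fin.castSucc j') = 0 := by
      simp [Matrix.reindex_apply, Matrix.submatrix_apply, finSumFinEquiv_symm_castSucc]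
    simp only [h5, h6, mul_zero, add_zero]
    refine Fin.lastCases ?_ (fun i' => ?_) i
    · simp [stiefelCoords]
    · have : ∑ l', stiefelCoords A' b₀ (Fin.castSucc i') (Fin.castSucc l') * (A'ᵀ * A) l' j'
          = (A' * (A'ᵀ * A)) i' j' := by
        rw [Matrix.mul_apply]
        refine Finset.sum_congr rfl fun l' _ => ?_
        simp [stiefelCoords]
      rw [this, hAQ]
      simp [stiefelCoords]
end

section
/- The matrix P_{A+b} = [[AA^T + b₀b₀^T/(‖b₀‖²+1), b₀/(‖b₀‖²+1)], [b₀^T/(‖b₀‖²+1), 1/(‖b₀‖²+1)]] ∈ ℝ^{(n+1)×(n+1)} is a symmetric idempotent (orthogonal projection) matrix of rank k+1, for any A ∈ ℝ^{n×k} with A^T A = I and b₀ ∈ ℝ^n with A^T b₀ = 0; moreover the assignment A + b ↦ P_{A+b} is well defined and injective on Graff(k,n). -/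
open Matrix

/-- The matrix of projection coordinates
`P_{A+b} = [[A Aᵀ + b₀b₀ᵀ/(‖b₀‖²+1), b₀/(‖b₀‖²+1)], [b₀ᵀ/(‖b₀‖²+1), 1/(‖b₀‖²+1)]]`
of an affine subspace with orthogonal affine coordinates `[A, b₀]`. -/
noncomputable def projCoordsMat {n k : ℕ} (A : Matrix (Fin n) (Fin k) ℝ)
    (b : Fin n → ℝ) : Matrix (Fin (n + 1)) (Fin (n + 1)) ℝ :=
  fun i j =>
    Fin.lastCases
      (Fin.lastCases (1 / (∑ t, b t ^ 2 + 1)) (fun i' => b i' / (∑ t, b t ^ 2 + 1)) i)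
      (fun j' =>
        Fin.lastCases (b j' / (∑ t, b t ^ 2 + 1))
          (fun i' => (A * A.transpose) i' j' + b i' * b j' / (∑ t, b t ^ 2 + 1)) i) j

section Aux

variable {n k : ℕ}

/-- The auxiliary `(n+1) × (k+1)` matrix `B = [[A, b/√s],[0, 1/√s]]` with `s = ‖b‖² + 1`. -/
noncomputable def Bmat (A : Matrix (Fin n) (Fin k) ℝ) (b : Fin n → ℝ) :
    Matrix (Fin (n + 1)) (Fin (k + 1)) ℝ :=
  fun i j =>
    Fin.lastCases
      (Fin.lastCases (1 / Real.sqrt (∑ t, b t ^ 2 + 1))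
        (fun i' => b i' / Real.sqrt (∑ t, b t ^ 2 + 1)) i)
      (fun j' => Fin.lastCases 0 (fun i' => A i' j') i) j

variable (A : Matrix (Fin n) (Fin k) ℝ) (b : Fin n → ℝ)

lemma s_pos : (0:ℝ) < ∑ t, b t ^ 2 + 1 := by positivity

lemma sqrt_mul_self_s :
    Real.sqrt (∑ t, b t ^ 2 + 1) * Real.sqrt (∑ t, b t ^ 2 + 1) = ∑ t, b t ^ 2 + 1 :=
  Real.mul_self_sqrt (le_of_lt (s_pos b))

lemma sqrt_s_ne : Real.sqrt (∑ t, b t ^ 2 + 1) ≠ 0 :=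
  ne_of_gt (Real.sqrt_pos.mpr (s_pos b))

@[simp] lemma Bmat_cc (i : Fin n) (j : Fin k) :
    Bmat A b i.castSucc j.castSucc = A i j := by
  simp [Bmat]

@[simp] lemma Bmat_cl (i : Fin n) :
    Bmat A b i.castSucc (Fin.last k) = b i / Real.sqrt (∑ t, b t ^ 2 + 1) := by
  simp [Bmat]

@[simp] lemma Bmat_lc (j : Fin k) :
    Bmat A b (Fin.last n) j.castSucc = 0 := by
  simp [Bmat]

@[simp] lemma Bmat_ll :
    Bmat A b (Fin.last n) (Fin.last k) = 1 / Real.sqrt (∑ t, b t ^ 2 + 1) := by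
  simp [Bmat]

@[simp] lemma proj_cc (i j : Fin n) :
    projCoordsMat A b i.castSucc j.castSucc =
      (A * A.transpose) i j + b i * b j / (∑ t, b t ^ 2 + 1) := by
  simp [projCoordsMat]

@[simp] lemma proj_cl (i : Fin n) :
    projCoordsMat A b i.castSucc (Fin.last n) = b i / (∑ t, b t ^ 2 + 1) := by
  simp [projCoordsMat]

@[simp] lemma proj_lc (j : Fin n) :
    projCoordsMat A b (Fin.last n) j.castSucc = b j / (∑ t, b t ^ 2 + 1) := by
  simp [projCoordsMat]

@[simp] lemma proj_ll :
    projCoordsMat A b (Fin.last n) (Fin.last n) = 1 / (∑ t, b t ^ 2 + 1) := by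
  simp [projCoordsMat]

/-- `P = B Bᵀ`, unconditionally. -/
lemma proj_eq_B_mul_Bt : projCoordsMat A b = Bmat A b * (Bmat A b).transpose := by
  have hss := sqrt_mul_self_s b
  ext i j
  rw [mul_apply, Fin.sum_univ_castSucc]
  refine Fin.lastCases ?_ (fun i' => ?_) i <;> refine Fin.lastCases ?_ (fun j' => ?_) j
  · -- last, last
    simp only [proj_ll, transpose_apply, Bmat_ll, Bmat_lc, mul_zero, zero_mul,
      Finset.sum_const_zero, zero_add]
    rw [div_mul_div_comm, hss]
    norm_num
  · -- last, castSucc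
    simp only [proj_lc, transpose_apply, Bmat_ll, Bmat_lc, Bmat_cl, Bmat_cc, mul_zero, zero_mul,
      Finset.sum_const_zero, zero_add]
    rw [div_mul_div_comm, hss, one_mul]
  · -- castSucc, last
    simp only [proj_cl, transpose_apply, Bmat_ll, Bmat_lc, Bmat_cl, Bmat_cc, mul_zero, zero_mul,
      Finset.sum_const_zero, zero_add]
    rw [div_mul_div_comm, hss, mul_one]
  · -- castSucc, castSucc
    simp only [proj_cc, transpose_apply, Bmat_ll, Bmat_lc, Bmat_cl, Bmat_cc]
    rw [div_mul_div_comm, hss, mul_apply]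
    simp [transpose_apply]

/-- `Bᵀ B = 1` when `AᵀA = 1` and `Aᵀ b = 0`. -/
lemma Bt_mul_B (hA : A.transpose * A = 1) (hb : A.transpose.mulVec b = 0) :
    (Bmat A b).transpose * Bmat A b = 1 := by
  have hss := sqrt_mul_self_s b
  have hs := s_pos b
  have hsne : (∑ t, b t ^ 2 + 1 : ℝ) ≠ 0 := ne_of_gt hs
  ext t u
  rw [mul_apply, Fin.sum_univ_castSucc]
  refine Fin.lastCases ?_ (fun t' => ?_) t <;> refine Fin.lastCases ?_ (fun u' => ?_) u
  · -- last, last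
    simp only [transpose_apply, Bmat_cl, Bmat_ll, one_apply_eq]
    rw [div_mul_div_comm, hss]
    have key : ∀ i' : Fin n, b i' / (Real.sqrt (∑ t, b t ^ 2 + 1)) *
        (b i' / (Real.sqrt (∑ t, b t ^ 2 + 1))) = b i' ^ 2 / (∑ t, b t ^ 2 + 1) := by
      intro i'; rw [div_mul_div_comm, hss, sq]
    rw [Finset.sum_congr rfl fun i' _ => key i', ← Finset.sum_div]
    field_simp
  · -- last, castSucc
    have hbu : ∑ i', A i' u' * b i' = 0 := by
      have := congrFun hb u'
      simpa [Matrix.mulVec, dotProduct, mul_comm] using this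
    have h1 : (1 : Matrix (Fin (k+1)) (Fin (k+1)) ℝ) (Fin.last k) u'.castSucc = 0 := by
      rw [one_apply_ne]
      exact (Fin.castSucc_lt_last u').ne'
    rw [h1]
    simp only [transpose_apply, Bmat_cc, Bmat_cl, Bmat_lc, Bmat_ll, mul_zero, add_zero]
    have key : ∀ i' : Fin n, b i' / (Real.sqrt (∑ t, b t ^ 2 + 1)) * A i' u' =
        (A i' u' * b i') / (Real.sqrt (∑ t, b t ^ 2 + 1)) := by
      intro i'; ring
    rw [Finset.sum_congr rfl fun i' _ => key i', ← Finset.sum_div, hbu, zero_div]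
  · -- castSucc, last
    have hbt : ∑ i', A i' t' * b i' = 0 := by
      have := congrFun hb t'
      simpa [Matrix.mulVec, dotProduct, mul_comm] using this
    have h1 : (1 : Matrix (Fin (k+1)) (Fin (k+1)) ℝ) t'.castSucc (Fin.last k) = 0 := by
      rw [one_apply_ne]
      exact (Fin.castSucc_lt_last t').ne
    rw [h1]
    simp only [transpose_apply, Bmat_cc, Bmat_cl, Bmat_lc, Bmat_ll, zero_mul, add_zero]
    have key : ∀ i' : Fin n, A i' t' * (b i' / (Real.sqrt (∑ t, b t ^ 2 + 1))) =
        (A i' t' * b i') / (Real.sqrt (∑ t, b t ^ 2 + 1)) := by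
      intro i'; ring
    rw [Finset.sum_congr rfl fun i' _ => key i', ← Finset.sum_div, hbt, zero_div]
  · -- castSucc, castSucc
    have hAA : ∑ x, A x t' * A x u' = (1 : Matrix (Fin k) (Fin k) ℝ) t' u' := by
      have h := congrFun (congrFun hA t') u'
      rw [mul_apply] at h
      simpa [transpose_apply] using h
    simp only [transpose_apply, Bmat_cc, Bmat_lc, zero_mul, mul_zero, add_zero]
    rw [hAA]
    by_cases h : t' = u'
    · subst h; simp
    · rw [one_apply_ne h, one_apply_ne (by simpa [Fin.castSucc_inj] using h)]

/-- If `M *ᵥ x = N *ᵥ x` for all `x`, then `M = N`. -/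
lemma eq_of_forall_mulVec {m l : Type*} [Fintype l] [DecidableEq l]
    (M N : Matrix m l ℝ) (h : ∀ x, M.mulVec x = N.mulVec x) : M = N := by
  ext i j
  have := congrFun (h (Pi.single j 1)) i
  simpa using this

end Aux

/-- For any `A` with orthonormal columns and `b₀` orthogonal to them, the
matrix `P_{A+b}` is a symmetric idempotent (orthogonal projection) of rank `k+1`;
moreover the assignment `A + b ↦ P_{A+b}` is well defined and injective on `Graff(k,n)`:
two orthogonal affine coordinates give the same matrix iff they define the same affine
subspace. -/
theorem projCoords_orthogonal_projection (n k : ℕ) :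
    (∀ (A : Matrix (Fin n) (Fin k) ℝ) (b₀ : Fin n → ℝ),
      A.transpose * A = 1 → A.transpose.mulVec b₀ = 0 →
        (projCoordsMat A b₀).transpose = projCoordsMat A b₀ ∧
        projCoordsMat A b₀ * projCoordsMat A b₀ = projCoordsMat A b₀ ∧
        (projCoordsMat A b₀).rank = k + 1) ∧
    (∀ (A A' : Matrix (Fin n) (Fin k) ℝ) (b₀ b₀' : Fin n → ℝ),
      A.transpose * A = 1 → A'.transpose * A' = 1 →
      A.transpose.mulVec b₀ = 0 → A'.transpose.mulVec b₀' = 0 →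
        (affSet A b₀ = affSet A' b₀' ↔ projCoordsMat A b₀ = projCoordsMat A' b₀')) := by
  constructor
  · intro A b hA hb
    have hPB := proj_eq_B_mul_Bt A b
    have hBB := Bt_mul_B A b hA hb
    refine ⟨?_, ?_, ?_⟩
    · rw [hPB, transpose_mul, transpose_transpose]
    · rw [hPB]
      calc Bmat A b * (Bmat A b)ᵀ * (Bmat A b * (Bmat A b)ᵀ)
          = Bmat A b * ((Bmat A b)ᵀ * Bmat A b) * (Bmat A b)ᵀ := by
            simp only [Matrix.mul_assoc]
        _ = Bmat A b * (Bmat A b)ᵀ := by rw [hBB, Matrix.mul_one]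
    · rw [hPB, Matrix.rank_self_mul_transpose]
      refine le_antisymm ?_ ?_
      · simpa using Matrix.rank_le_width (Bmat A b)
      · calc (k + 1 : ℕ) = ((1 : Matrix (Fin (k+1)) (Fin (k+1)) ℝ)).rank := by simp
          _ = ((Bmat A b)ᵀ * Bmat A b).rank := by rw [hBB]
          _ ≤ (Bmat A b).rank := Matrix.rank_mul_le_right _ _
  · intro A A' b b' hA hA' hb hb'
    constructor
    · intro h
      -- first: b = b'
      have hbmem : b ∈ affSet A' b' := by
        rw [← h]; exact ⟨0, by simp⟩
      have hbmem' : b' ∈ affSet A b := by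
        rw [h]; exact ⟨0, by simp⟩
      obtain ⟨x₀, hx₀⟩ := hbmem
      obtain ⟨x₁, hx₁⟩ := hbmem'
      have hd1 : b - b' = A'.mulVec x₀ := (eq_sub_of_add_eq hx₀).symm
      have hd2 : b' - b = A.mulVec x₁ := (eq_sub_of_add_eq hx₁).symm
      have hdot1 : dotProduct (b - b') b' = 0 := by
        rw [hd1, dotProduct_comm, dotProduct_mulVec, ← Matrix.mulVec_transpose, hb',
          zero_dotProduct]
      have hdot2 : dotProduct (b' - b) b = 0 := by
        rw [hd2, dotProduct_comm, dotProduct_mulVec, ← Matrix.mulVec_transpose, hb,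
          zero_dotProduct]
      have hbb : b - b' = 0 := by
        rw [← dotProduct_self_eq_zero (R := ℝ)]
        rw [dotProduct_sub, hdot1, sub_zero, ← neg_sub b' b, neg_dotProduct, hdot2, neg_zero]
      have hbeq : b' = b := (sub_eq_zero.mp hbb).symm
      rw [hbeq] at h hb' ⊢
      -- second: A * Aᵀ = A' * A'ᵀ
      have key : ∀ (C C' : Matrix (Fin n) (Fin k) ℝ), C'.transpose * C' = 1 →
          affSet C b = affSet C' b → C' * C'.transpose * C = C := by
        intro C C' hC' hset
        apply eq_of_forall_mulVec
        intro x
        have hmem : C.mulVec x + b ∈ affSet C' b := by rw [← hset]; exact ⟨x, rfl⟩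
        obtain ⟨x', hx'⟩ := hmem
        have hxx : C'.mulVec x' = C.mulVec x := add_right_cancel hx'
        calc (C' * C'ᵀ * C).mulVec x = (C' * C'ᵀ).mulVec (C.mulVec x) := by
              rw [← Matrix.mulVec_mulVec]
          _ = (C' * C'ᵀ).mulVec (C'.mulVec x') := by rw [hxx]
          _ = (C' * (C'ᵀ * C')).mulVec x' := by rw [Matrix.mulVec_mulVec, Matrix.mul_assoc]
          _ = C.mulVec x := by rw [hC', Matrix.mul_one, hxx]
      have hQA : A' * A'.transpose * A = A := key A A' hA' h
      have hPA' : A * A.transpose * A' = A' := key A' A hA h.symm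
      have h1 : A' * A'ᵀ * (A * Aᵀ) = A * Aᵀ := by rw [← Matrix.mul_assoc, hQA]
      have h2 : A * Aᵀ * (A' * A'ᵀ) = A' * A'ᵀ := by rw [← Matrix.mul_assoc, hPA']
      have hPQ : A * Aᵀ = A' * A'ᵀ := by
        calc A * Aᵀ = (A * Aᵀ)ᵀ := by rw [transpose_mul, transpose_transpose]
          _ = (A' * A'ᵀ * (A * Aᵀ))ᵀ := by rw [h1]
          _ = (A * Aᵀ)ᵀ * (A' * A'ᵀ)ᵀ := by rw [transpose_mul]
          _ = A * Aᵀ * (A' * A'ᵀ) := by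
              rw [transpose_mul, transpose_mul, transpose_transpose, transpose_transpose]
          _ = A' * A'ᵀ := h2
      unfold projCoordsMat
      rw [hPQ]
    · intro h
      -- extract entries
      have hs := s_pos b
      have hs' := s_pos b'
      have hll := congrFun (congrFun h (Fin.last n)) (Fin.last n)
      rw [proj_ll, proj_ll] at hll
      have hseq : (∑ t, b t ^ 2 + 1 : ℝ) = ∑ t, b' t ^ 2 + 1 := by
        field_simp at hll
        linarith
      have hbeq : b = b' := by
        funext i
        have := congrFun (congrFun h i.castSucc) (Fin.last n)
        rw [proj_cl, proj_cl, ← hseq] at this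
        have h2 := (div_eq_div_iff (ne_of_gt hs) (ne_of_gt hs)).mp this
        exact mul_right_cancel₀ (ne_of_gt hs) h2
      have hAA : A * A.transpose = A' * A'.transpose := by
        ext i j
        have := congrFun (congrFun h i.castSucc) j.castSucc
        rw [proj_cc, proj_cc, ← hseq, ← hbeq] at this
        exact add_right_cancel this
      -- now show set equality
      subst hbeq
      apply Set.eq_of_subset_of_subset
      · rintro v ⟨x, rfl⟩
        refine ⟨A'.transpose.mulVec (A.mulVec x), ?_⟩
        simp only [Matrix.mulVec_mulVec]
        rw [← Matrix.mul_assoc, ← hAA, Matrix.mul_assoc, hA, Matrix.mul_one]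
      · rintro v ⟨x, rfl⟩
        refine ⟨A.transpose.mulVec (A'.mulVec x), ?_⟩
        simp only [Matrix.mulVec_mulVec]
        rw [← Matrix.mul_assoc, hAA, Matrix.mul_assoc, hA', Matrix.mul_one]
end
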